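/- For any hypothesis h, if L⇝_P(h) ≤ α (expected strategic loss under surrogate graph ⇝) and d_{H,P_X}(→,⇝) ≤ β with h ∈ H, then L→_P(h) ≤ 2α + β; i.e., minimizing the surrogate strategic loss controls the true strategic loss up to factor 2 plus the graph distance. -/
import Mathlib


open MeasureTheory

open Classical in
noncomputable def l01 {X : Type*} (h : X → Bool) (x : X) (y : Bool) : ℝ :=
  if h x ≠ y then 1 else 0

open Classical in
noncomputable def lsc {X : Type*} (R : X → X → Prop) (h : X → Bool) (x : X) : ℝ :=
  if h x = false ∧ ∃ x', R x x' ∧ h x' = true then 1 else 0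

open Classical in
noncomputable def lstr {X : Type*} (R : X → X → Prop) (h : X → Bool) (x : X) (y : Bool) : ℝ :=
  if h x ≠ y ∨ (h x = false ∧ ∃ x', R x x' ∧ h x' = true) then 1 else 0

def lossSet01 {X : Type*} (h : X → Bool) : Set (X × Bool) := {p | h p.1 ≠ p.2}

def lossSetSc {X : Type*} (R : X → X → Prop) (h : X → Bool) : Set (X × Bool) :=
  {p | h p.1 = false ∧ ∃ x', R p.1 x' ∧ h x' = true}

def lossSetStr {X : Type*} (R : X → X → Prop) (h : X → Bool) : Set (X × Bool) :=
  {p | h p.1 ≠ p.2 ∨ (h p.1 = false ∧ ∃ x', R p.1 x' ∧ h x' = true)}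

def graphOf {X : Type*} (h : X → Bool) : Set (X × Bool) := {p | p.2 = h p.1}

def Shatters {Z : Type*} (U : Set (Set Z)) (S : Finset Z) : Prop :=
  ∀ T ⊆ S, ∃ u ∈ U, ∀ z ∈ S, (z ∈ u ↔ z ∈ T)

noncomputable def vcDim {Z : Type*} (U : Set (Set Z)) : ℕ∞ :=
  ⨆ (S : Finset Z) (_ : Shatters U S), (S.card : ℕ∞)

def ShattersF {X : Type*} (H : Set (X → Bool)) (S : Finset X) : Prop :=
  ∀ f : X → Bool, ∃ h ∈ H, ∀ x ∈ S, h x = f x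

noncomputable def vcDimF {X : Type*} (H : Set (X → Bool)) : ℕ∞ :=
  ⨆ (S : Finset X) (_ : ShattersF H S), (S.card : ℕ∞)

noncomputable def sLoss {X : Type*} [MeasurableSpace X] (P : Measure (X × Bool))
    (R : X → X → Prop) (h : X → Bool) : ℝ := ∫ p, lstr R h p.1 p.2 ∂P

noncomputable def bLoss {X : Type*} [MeasurableSpace X] (P : Measure (X × Bool))
    (h : X → Bool) : ℝ := ∫ p, l01 h p.1 p.2 ∂P

noncomputable def scLoss {X : Type*} [MeasurableSpace X] (PX : Measure X)
    (R : X → X → Prop) (h : X → Bool) : ℝ := ∫ x, lsc R h x ∂PX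

noncomputable def gdist {X : Type*} [MeasurableSpace X] (H : Set (X → Bool))
    (PX : Measure X) (R R' : X → X → Prop) : ℝ :=
  ⨆ h : H, ∫ x, |lsc R h.1 x - lsc R' h.1 x| ∂PX

open Classical in
noncomputable def lgr {X : Type*} (h : X → Bool) (R' : X → X → Prop) (x : X) (B : Set X) : ℝ :=
  if (h x = false ∧ (∃ x' ∈ B, h x' = true) ∧ (∀ x'', R' x x'' → h x'' = false)) ∨
     (h x = false ∧ (∀ x' ∈ B, h x' = false) ∧ (∃ x'', R' x x'' ∧ h x'' = true)) then 1 else 0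

def grLossSet {X : Type*} (h : X → Bool) (R' : X → X → Prop) : Set (X × Set X) :=
  {p | lgr h R' p.1 p.2 = 1}

lemma lstr_nonneg {X : Type*} (R : X → X → Prop) (h : X → Bool) (x : X) (y : Bool) :
    0 ≤ lstr R h x y := by unfold lstr; split <;> norm_num

lemma lstr_le_one {X : Type*} (R : X → X → Prop) (h : X → Bool) (x : X) (y : Bool) :
    lstr R h x y ≤ 1 := by unfold lstr; split <;> norm_num

lemma lsc_mem {X : Type*} (R : X → X → Prop) (h : X → Bool) (x : X) :
    lsc R h x = 0 ∨ lsc R h x = 1 := by unfold lsc; split <;> simp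

lemma abs_diff_le_one {X : Type*} (R R' : X → X → Prop) (g : X → Bool) (x : X) :
    |lsc R g x - lsc R' g x| ≤ 1 := by
  rcases lsc_mem R g x with h1 | h1 <;> rcases lsc_mem R' g x with h2 | h2 <;>
    simp [h1, h2]

lemma key_pt {X : Type*} (R R' : X → X → Prop) (h : X → Bool) (x : X) (y : Bool) :
    lstr R h x y ≤ 2 * lstr R' h x y + |lsc R h x - lsc R' h x| := by
  unfold lstr lsc
  split_ifs <;> norm_num <;> aesop

lemma int_of_bdd {Z : Type*} [MeasurableSpace Z] (ν : MeasureTheory.Measure Z)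
    [MeasureTheory.IsProbabilityMeasure ν] (f : Z → ℝ) (hf : Measurable f)
    (hb : ∀ a, |f a| ≤ 1) : MeasureTheory.Integrable f ν := by
  refine ⟨hf.aestronglyMeasurable, ?_⟩
  exact MeasureTheory.HasFiniteIntegral.of_bounded (C := 1)
    (Filter.Eventually.of_forall fun a => by simpa using hb a)

theorem stmt16 {X : Type*} [MeasurableSpace X] (P : Measure (X × Bool))
    [IsProbabilityMeasure P] (H : Set (X → Bool)) (R R' : X → X → Prop)
    (h : X → Bool) (hH : h ∈ H) (α β : ℝ)
    (hm : ∀ g ∈ H, Measurable (lsc R g)) (hm' : ∀ g ∈ H, Measurable (lsc R' g))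
    (hms : Measurable (fun p : X × Bool => lstr R h p.1 p.2))
    (hms' : Measurable (fun p : X × Bool => lstr R' h p.1 p.2))
    (hmb : Measurable (fun p : X × Bool => l01 h p.1 p.2))
    (hα : sLoss P R' h ≤ α) (hβ : gdist H (P.map Prod.fst) R R' ≤ β) :
    sLoss P R h ≤ 2 * α + β := by
  have hPX : IsProbabilityMeasure (P.map (Prod.fst : X × Bool → X)) :=
    Measure.isProbabilityMeasure_map measurable_fst.aemeasurable
  set μ := P.map (Prod.fst : X × Bool → X) with hμ
  -- measurability of the diff function
  have hmd : Measurable (fun x : X => |lsc R h x - lsc R' h x|) :=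
    ((hm h hH).sub (hm' h hH)).abs
  have hmdP : Measurable (fun p : X × Bool => |lsc R h p.1 - lsc R' h p.1|) :=
    hmd.comp measurable_fst
  -- integrability helpers
  have i1 : Integrable (fun p : X × Bool => lstr R h p.1 p.2) P :=
    int_of_bdd P (fun p : X × Bool => lstr R h p.1 p.2) hms fun p => by
      rw [abs_of_nonneg (lstr_nonneg _ _ _ _)]; exact lstr_le_one _ _ _ _
  have i2 : Integrable (fun p : X × Bool => lstr R' h p.1 p.2) P :=
    int_of_bdd P (fun p : X × Bool => lstr R' h p.1 p.2) hms' fun p => by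
      rw [abs_of_nonneg (lstr_nonneg _ _ _ _)]; exact lstr_le_one _ _ _ _
  have i3 : Integrable (fun p : X × Bool => |lsc R h p.1 - lsc R' h p.1|) P :=
    int_of_bdd P (fun p : X × Bool => |lsc R h p.1 - lsc R' h p.1|) hmdP fun p => by
      rw [abs_abs]; exact abs_diff_le_one _ _ _ _
  have step1 : sLoss P R h ≤ 2 * sLoss P R' h +
      ∫ p, |lsc R h p.1 - lsc R' h p.1| ∂P := by
    unfold sLoss
    have : (∫ p, lstr R h p.1 p.2 ∂P) ≤
        ∫ p, (2 * lstr R' h p.1 p.2 + |lsc R h p.1 - lsc R' h p.1|) ∂P :=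
      integral_mono i1 ((i2.const_mul 2).add i3) fun p => key_pt R R' h p.1 p.2
    rwa [integral_add (i2.const_mul 2) i3, integral_const_mul] at this
  have step2 : (∫ p, |lsc R h p.1 - lsc R' h p.1| ∂P) =
      ∫ x, |lsc R h x - lsc R' h x| ∂μ := by
    rw [hμ, integral_map measurable_fst.aemeasurable hmd.aestronglyMeasurable]
  have step3 : (∫ x, |lsc R h x - lsc R' h x| ∂μ) ≤ gdist H μ R R' := by
    unfold gdist
    have hbdd : BddAbove (Set.range fun g : H => ∫ x, |lsc R g.1 x - lsc R' g.1 x| ∂μ) := by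
      refine ⟨1, ?_⟩
      rintro r ⟨g, rfl⟩
      have hmg : Measurable (fun x : X => |lsc R g.1 x - lsc R' g.1 x|) :=
        ((hm g.1 g.2).sub (hm' g.1 g.2)).abs
      calc (∫ x, |lsc R g.1 x - lsc R' g.1 x| ∂μ)
          ≤ ∫ _x, (1 : ℝ) ∂μ :=
            integral_mono (int_of_bdd μ (fun x : X => |lsc R g.1 x - lsc R' g.1 x|) hmg fun x => by
              rw [abs_abs]; exact abs_diff_le_one _ _ _ _)
              (integrable_const 1) (fun x => abs_diff_le_one _ _ _ _)
        _ = 1 := by simp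
    exact le_ciSup hbdd ⟨h, hH⟩
  calc sLoss P R h ≤ 2 * sLoss P R' h + ∫ p, |lsc R h p.1 - lsc R' h p.1| ∂P := step1
    _ = 2 * sLoss P R' h + ∫ x, |lsc R h x - lsc R' h x| ∂μ := by rw [step2]
    _ ≤ 2 * α + β := by
        have := step3.trans hβ
        nlinarith [this, hα]
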